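/- Let m, l ∈ N_0^n with |l| ≥ 2, and suppose there exist 1 ≤ i < j ≤ n with m_i ≠ 0 and m_j ≠ 0. If the systems of equations m_i(m_i−1)/N(m) = l_i(l_i−1)/N(l), m_j(m_j−1)/N(m) = l_j(l_j−1)/N(l), and m_i m_j / N(m) = l_i l_j / N(l) hold (equivalently Q_m = Q_l as monomials), then m = l. -/

import Mathlib

/-- `N(m) = gcd{m_i(m_i−1), m_j m_k : 1 ≤ i,j,k ≤ n, j < k}`. -/
def Nnum {n : ℕ} (m : Fin n → ℕ) : ℕ :=
  Finset.gcd (Finset.univ ×ˢ Finset.univ)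
    (fun p : Fin n × Fin n =>
      if p.1 = p.2 then m p.1 * (m p.1 - 1) else m p.1 * m p.2)

/-- The monomial `Q_m = Π_i p_{ii}^{m_i(m_i−1)/N(m)} · Π_{i<j} (p_{ij}p_{ji})^{m_i m_j/N(m)}`
in `ℤ[p_{ij} : 1 ≤ i,j ≤ n]`. -/
noncomputable def Qmono {n : ℕ} (m : Fin n → ℕ) : MvPolynomial (Fin n × Fin n) ℤ :=
  ∏ p ∈ Finset.univ ×ˢ Finset.univ,
    MvPolynomial.X p ^
      (if p.1 = p.2 then m p.1 * (m p.1 - 1) / Nnum m else m p.1 * m p.2 / Nnum m)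

open MvPolynomial in
lemma prod_pow_monomial {σ R : Type*} [DecidableEq σ] [CommSemiring R]
    (s : Finset σ) (f : σ → ℕ) :
    ∏ x ∈ s, (X x : MvPolynomial σ R) ^ f x
      = monomial (∑ x ∈ s, Finsupp.single x (f x)) (1 : R) := by
  induction s using Finset.induction with
  | empty => simp [monomial_zero']
  | @insert _ _ h ih =>
    rw [Finset.prod_insert h, Finset.sum_insert h, ih, X_pow_eq_monomial, monomial_mul, one_mul]

lemma nat_mul_pred_add (c : ℕ) : c * (c - 1) + c = c * c := by
  cases c with
  | zero => simp
  | succ d => simp only [Nat.succ_sub_one]; ring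

/-- Let `m, l ∈ ℕ_0^n` with `|l| ≥ 2` and suppose there are `i < j` with
`m_i ≠ 0 ≠ m_j`. If `Q_m = Q_l` as monomials (equivalently, the systems of equations
`m_i(m_i−1)/N(m) = l_i(l_i−1)/N(l)`, `m_j(m_j−1)/N(m) = l_j(l_j−1)/N(l)` and
`m_i m_j/N(m) = l_i l_j/N(l)` hold), then `m = l`. -/
theorem stmt7 {n : ℕ} (m l : Fin n → ℕ) (hl : 2 ≤ ∑ i, l i)
    (i j : Fin n) (hij : i < j) (hmi : m i ≠ 0) (hmj : m j ≠ 0)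
    (hQ : Qmono m = Qmono l) :
    m = l := by
  classical
  set a := Nnum m with ha
  set b := Nnum l with hb
  set F : Fin n × Fin n → ℕ :=
    fun p => if p.1 = p.2 then m p.1 * (m p.1 - 1) else m p.1 * m p.2 with hF
  set G : Fin n × Fin n → ℕ :=
    fun p => if p.1 = p.2 then l p.1 * (l p.1 - 1) else l p.1 * l p.2 with hG
  have hdF : ∀ p : Fin n × Fin n, a ∣ F p := fun p =>
    Finset.gcd_dvd (by simp)
  have hdG : ∀ p : Fin n × Fin n, b ∣ G p := fun p =>
    Finset.gcd_dvd (by simp)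
  -- extract exponent equality from hQ
  have hQm : Qmono m = MvPolynomial.monomial
      (∑ q ∈ Finset.univ ×ˢ Finset.univ, Finsupp.single q (F q / a)) (1 : ℤ) := by
    rw [Qmono, ← prod_pow_monomial]
    refine Finset.prod_congr rfl fun p _ => ?_
    by_cases h : p.1 = p.2 <;> simp [hF, h, ha]
  have hQl : Qmono l = MvPolynomial.monomial
      (∑ q ∈ Finset.univ ×ˢ Finset.univ, Finsupp.single q (G q / b)) (1 : ℤ) := by
    rw [Qmono, ← prod_pow_monomial]
    refine Finset.prod_congr rfl fun p _ => ?_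
    by_cases h : p.1 = p.2 <;> simp [hG, h, hb]
  rw [hQm, hQl] at hQ
  have hd := MvPolynomial.monomial_left_injective (one_ne_zero (α := ℤ)) hQ
  have hexp : ∀ p : Fin n × Fin n, F p / a = G p / b := by
    intro p
    have := congrArg (fun d : (Fin n × Fin n) →₀ ℕ => d p) hd
    simpa [Finset.sum_apply', Finsupp.single_apply] using this
  -- key cross relation
  have key : ∀ p : Fin n × Fin n, b * F p = a * G p := by
    intro p
    have h1 := Nat.div_mul_cancel (hdF p)
    have h2 := Nat.div_mul_cancel (hdG p)
    calc b * F p = (F p / a * a) * b := by rw [h1]; ring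
      _ = (G p / b * b) * a := by rw [hexp p]; ring
      _ = a * G p := by rw [h2]; ring
  have hijne : i ≠ j := Fin.ne_of_lt hij
  have hane : a ≠ 0 := by
    intro h
    have := hdF (i, j)
    rw [h] at this
    have h0 := Nat.eq_zero_of_zero_dvd this
    simp [hF, hijne] at h0
    rcases h0 with h0 | h0 <;> [exact hmi h0; exact hmj h0]
  have hbne : b ≠ 0 := by
    intro h
    have hz : ∀ p : Fin n × Fin n, G p = 0 := by
      intro p
      have := hdG p; rw [h] at this; exact Nat.eq_zero_of_zero_dvd this
    obtain ⟨k, hk⟩ : ∃ k, l k ≠ 0 := by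
      by_contra hall
      push_neg at hall
      simp [hall] at hl
    have hk1 : l k ≤ 1 := by
      have := hz (k, k); simp [hG] at this; omega
    have hrest : ∀ r, r ≠ k → l r = 0 := by
      intro r hr
      have := hz (r, k); simp [hG, hr] at this
      rcases this with h0 | h0; · exact h0
      · exact absurd h0 hk
    have : ∑ r, l r = l k := Finset.sum_eq_single k (fun r _ hr => hrest r hr) (by simp)
    omega
  set S := ∑ r, m r with hS
  set T := ∑ r, l r with hT
  -- row sums
  have hMk : ∀ k, (∑ r, F (k, r)) + m k = m k * S := by
    intro k
    rw [← Finset.sum_erase_add _ _ (Finset.mem_univ k)]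
    have h1 : ∑ r ∈ Finset.univ.erase k, F (k, r) = ∑ r ∈ Finset.univ.erase k, m k * m r := by
      refine Finset.sum_congr rfl fun r hr => ?_
      have : k ≠ r := fun h => (Finset.mem_erase.mp hr).1 h.symm
      simp [hF, this]
    rw [h1]
    have h2 : F (k, k) = m k * (m k - 1) := by simp [hF]
    rw [h2, add_assoc, nat_mul_pred_add, hS, Finset.mul_sum,
      ← Finset.sum_erase_add _ _ (Finset.mem_univ k)]
  have hLk : ∀ k, (∑ r, G (k, r)) + l k = l k * T := by
    intro k
    rw [← Finset.sum_erase_add _ _ (Finset.mem_univ k)]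
    have h1 : ∑ r ∈ Finset.univ.erase k, G (k, r) = ∑ r ∈ Finset.univ.erase k, l k * l r := by
      refine Finset.sum_congr rfl fun r hr => ?_
      have : k ≠ r := fun h => (Finset.mem_erase.mp hr).1 h.symm
      simp [hG, this]
    rw [h1]
    have h2 : G (k, k) = l k * (l k - 1) := by simp [hG]
    rw [h2, add_assoc, nat_mul_pred_add, hT, Finset.mul_sum,
      ← Finset.sum_erase_add _ _ (Finset.mem_univ k)]
  -- additive form of the key relation per index
  have P : ∀ k, b * (m k * S) + a * l k = a * (l k * T) + b * m k := by
    intro k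
    have hsum : b * (∑ r, F (k, r)) = a * (∑ r, G (k, r)) := by
      rw [Finset.mul_sum, Finset.mul_sum]
      exact Finset.sum_congr rfl fun r _ => key (k, r)
    have h1 := hMk k
    have h2 := hLk k
    calc b * (m k * S) + a * l k = b * ((∑ r, F (k, r)) + m k) + a * l k := by rw [h1]
      _ = a * (∑ r, G (k, r)) + b * m k + a * l k := by rw [mul_add, hsum]
      _ = a * ((∑ r, G (k, r)) + l k) + b * m k := by ring
      _ = a * (l k * T) + b * m k := by rw [h2]
  -- move to ℤ
  have Pz : ∀ k, (b : ℤ) * m k * ((S : ℤ) - 1) = (a : ℤ) * l k * ((T : ℤ) - 1) := by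
    intro k
    have h := P k
    have h' : ((b * (m k * S) + a * l k : ℕ) : ℤ) = ((a * (l k * T) + b * m k : ℕ) : ℤ) := by
      exact_mod_cast h
    push_cast at h'
    linear_combination h'
  have key2z : (b : ℤ) * ((m i : ℤ) * m j) = (a : ℤ) * ((l i : ℤ) * l j) := by
    have h := key (i, j)
    simp only [hF, hG, hijne, if_neg] at h
    exact_mod_cast h
  have hS2 : 2 ≤ S := by
    have hsub : ({i, j} : Finset (Fin n)) ⊆ Finset.univ := Finset.subset_univ _
    have := Finset.sum_le_sum_of_subset hsub (f := m)
    rw [Finset.sum_pair hijne] at this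
    omega
  have haz : (0 : ℤ) < a := by exact_mod_cast Nat.pos_of_ne_zero hane
  have hbz : (0 : ℤ) < b := by exact_mod_cast Nat.pos_of_ne_zero hbne
  have hSz : (2 : ℤ) ≤ S := by exact_mod_cast hS2
  have hTz : (2 : ℤ) ≤ T := by exact_mod_cast hl
  have hmiz : (0 : ℤ) < m i := by exact_mod_cast Nat.pos_of_ne_zero hmi
  have hmjz : (0 : ℤ) < m j := by exact_mod_cast Nat.pos_of_ne_zero hmj
  have hmm : (b : ℤ) * ((m i : ℤ) * m j) ≠ 0 := by positivity
  -- E1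
  have E1 : (b : ℤ) * ((S : ℤ) - 1) ^ 2 * (b * ((m i : ℤ) * m j))
      = (a : ℤ) * ((T : ℤ) - 1) ^ 2 * (b * ((m i : ℤ) * m j)) := by
    calc (b : ℤ) * ((S : ℤ) - 1) ^ 2 * (b * ((m i : ℤ) * m j))
        = ((b : ℤ) * m i * ((S : ℤ) - 1)) * ((b : ℤ) * m j * ((S : ℤ) - 1)) := by ring
      _ = ((a : ℤ) * l i * ((T : ℤ) - 1)) * ((a : ℤ) * l j * ((T : ℤ) - 1)) := by
          rw [Pz i, Pz j]
      _ = (a : ℤ) * ((T : ℤ) - 1) ^ 2 * (a * ((l i : ℤ) * l j)) := by ring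
      _ = (a : ℤ) * ((T : ℤ) - 1) ^ 2 * (b * ((m i : ℤ) * m j)) := by rw [← key2z]
  have E1' : (b : ℤ) * ((S : ℤ) - 1) ^ 2 = (a : ℤ) * ((T : ℤ) - 1) ^ 2 :=
    mul_right_cancel₀ hmm E1
  -- E2 : sum of Pz
  have E2 : (b : ℤ) * (S : ℤ) * ((S : ℤ) - 1) = (a : ℤ) * (T : ℤ) * ((T : ℤ) - 1) := by
    have hsum : ∑ k, (b : ℤ) * m k * ((S : ℤ) - 1) = ∑ k, (a : ℤ) * l k * ((T : ℤ) - 1) :=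
      Finset.sum_congr rfl fun k _ => Pz k
    have hS' : ((S : ℤ)) = ∑ k, (m k : ℤ) := by rw [hS]; push_cast; ring
    have hT' : ((T : ℤ)) = ∑ k, (l k : ℤ) := by rw [hT]; push_cast; ring
    calc (b : ℤ) * (S : ℤ) * ((S : ℤ) - 1)
        = ∑ k, (b : ℤ) * m k * ((S : ℤ) - 1) := by
          rw [hS', Finset.mul_sum, Finset.sum_mul]
      _ = ∑ k, (a : ℤ) * l k * ((T : ℤ) - 1) := hsum
      _ = (a : ℤ) * (T : ℤ) * ((T : ℤ) - 1) := by
          rw [hT', Finset.mul_sum, Finset.sum_mul]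
  -- E3 : b(S-1) = a(T-1)
  have E3 : (b : ℤ) * ((S : ℤ) - 1) = (a : ℤ) * ((T : ℤ) - 1) := by
    linear_combination E2 - E1'
  -- S = T
  have hzero : (a : ℤ) * ((T : ℤ) - 1) * (((S : ℤ) - 1) - ((T : ℤ) - 1)) = 0 := by
    linear_combination E1' - ((S : ℤ) - 1) * E3
  have hat : (a : ℤ) * ((T : ℤ) - 1) ≠ 0 := by
    have : (0 : ℤ) < (T : ℤ) - 1 := by linarith
    positivity
  have hST : (S : ℤ) - 1 = (T : ℤ) - 1 := by
    have := (mul_eq_zero.mp hzero).resolve_left hat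
    linarith
  have hab : (a : ℤ) = b := by
    have hS1 : ((S : ℤ) - 1) ≠ 0 := by linarith
    have : (b : ℤ) * ((S : ℤ) - 1) = (a : ℤ) * ((S : ℤ) - 1) := by rw [E3, hST]
    exact (mul_right_cancel₀ hS1 this).symm
  funext k
  have h := Pz k
  rw [← hST, ← hab] at h
  have hS1 : ((S : ℤ) - 1) ≠ 0 := by linarith
  have h2 := mul_right_cancel₀ hS1 h
  have h3 := mul_left_cancel₀ (by positivity : (a : ℤ) ≠ 0) h2
  exact_mod_cast h3
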